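/- For every A ∈ GL₂(ℤ), one has |A⁻¹| = |A|. -/
import Mathlib


/-- The matrix `S₁ = [[1,-1],[0,-1]]` as an element of `GL₂(ℤ)`. -/
def S₁ : GL (Fin 2) ℤ := ⟨!![1, -1; 0, -1], !![1, -1; 0, -1], by decide, by decide⟩

/-- The matrix `S₂ = [[-1,0],[-1,1]]` as an element of `GL₂(ℤ)`. -/
def S₂ : GL (Fin 2) ℤ := ⟨!![-1, 0; -1, 1], !![-1, 0; -1, 1], by decide, by decide⟩

/-- The matrix `S₃ = [[0,1],[1,0]]` as an element of `GL₂(ℤ)`. -/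
def S₃ : GL (Fin 2) ℤ := ⟨!![0, 1; 1, 0], !![0, 1; 1, 0], by decide, by decide⟩

/-- The matrix `J = [[-1,0],[0,1]]` as an element of `GL₂(ℤ)`. -/
def Jmat : GL (Fin 2) ℤ := ⟨!![-1, 0; 0, 1], !![-1, 0; 0, 1], by decide, by decide⟩

/-- `SS k` is `Sₖ` for `k ∈ {1,2,3}` (junk value `1` otherwise). -/
def SS : ℕ → GL (Fin 2) ℤ
  | 1 => S₁
  | 2 => S₂
  | 3 => S₃
  | _ => 1

/-- `wordProd i n = S_{i 0} · J · S_{i 1} · J ⋯ S_{i (n-1)} · J · S_{i n}`,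
the alternating word with `n` factors `J` and `n+1` factors `S`. -/
def wordProd (i : ℕ → ℕ) : ℕ → GL (Fin 2) ℤ
  | 0 => SS (i 0)
  | n + 1 => wordProd i n * Jmat * SS (i (n + 1))

/-- The norm `|A|` of `A ∈ GL₂(ℤ)`: the number `n` of factors `J` in the (unique)
expression `A = ε · S_{i₀} · J · S_{i₁} · J ⋯ S_{i_{n-1}} · J · S_{i_n} · S₁^m` with
`ε ∈ {1,-1}`, `i₀, i_n ∈ {1,2,3}`, `i₁, …, i_{n-1} ∈ {1,2}`, `m ∈ {0,1}`. -/
noncomputable def matNorm (A : GL (Fin 2) ℤ) : ℕ :=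
  sInf {n | ∃ (ε : GL (Fin 2) ℤ) (i : ℕ → ℕ) (m : ℕ),
    (ε = 1 ∨ ε = -1) ∧
    (i 0 = 1 ∨ i 0 = 2 ∨ i 0 = 3) ∧
    (i n = 1 ∨ i n = 2 ∨ i n = 3) ∧
    (∀ k, 0 < k → k < n → i k = 1 ∨ i k = 2) ∧
    m ≤ 1 ∧
    A = ε * wordProd i n * S₁ ^ m}

/-- The conjugacy norm `‖A‖`: the minimum of `|B·A·B⁻¹|` over all `B ∈ GL₂(ℤ)`. -/
noncomputable def matNormConj (A : GL (Fin 2) ℤ) : ℕ :=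
  sInf {k | ∃ B : GL (Fin 2) ℤ, matNorm (B * A * B⁻¹) = k}

/- ### Auxiliary lemmas -/

lemma S1_inv : S₁⁻¹ = S₁ := rfl
lemma J_inv : Jmat⁻¹ = Jmat := rfl

lemma SS_inv (k : ℕ) : (SS k)⁻¹ = SS k := by
  match k with
  | 0 => exact inv_one
  | 1 => rfl
  | 2 => rfl
  | 3 => rfl
  | (n+4) => exact inv_one

lemma idM1 : S₃ * S₁ * Jmat = -(S₂ * Jmat * S₃) := by apply Units.ext; decide
lemma idM2 : S₃ * S₂ * Jmat = -(S₁ * Jmat * S₃) := by apply Units.ext; decide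
lemma idH1 : S₁ * S₁ * Jmat = -(S₃ * Jmat * S₃) := by apply Units.ext; decide
lemma idH2 : S₁ * S₂ * Jmat = -(S₂ * Jmat * S₃) := by apply Units.ext; decide
lemma idH3 : S₁ * S₃ * Jmat = -(S₁ * Jmat * S₃) := by apply Units.ext; decide
lemma idT2 : S₃ * S₂ = S₂ * S₁ := by apply Units.ext; decide
lemma idT3 : S₃ * S₃ = S₁ * S₁ := by apply Units.ext; decide
lemma idZ2 : S₁ * S₂ = S₃ * S₁ := by apply Units.ext; decide
lemma idZ3 : S₁ * S₃ = S₂ * S₁ := by apply Units.ext; decide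

lemma idM1x (x : GL (Fin 2) ℤ) : S₃ * (S₁ * (Jmat * x)) = -(S₂ * (Jmat * (S₃ * x))) := by
  rw [← mul_assoc, ← mul_assoc, idM1]; simp [mul_assoc]
lemma idM2x (x : GL (Fin 2) ℤ) : S₃ * (S₂ * (Jmat * x)) = -(S₁ * (Jmat * (S₃ * x))) := by
  rw [← mul_assoc, ← mul_assoc, idM2]; simp [mul_assoc]
lemma idH1x (x : GL (Fin 2) ℤ) : S₁ * (S₁ * (Jmat * x)) = -(S₃ * (Jmat * (S₃ * x))) := by
  rw [← mul_assoc, ← mul_assoc, idH1]; simp [mul_assoc]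
lemma idH2x (x : GL (Fin 2) ℤ) : S₁ * (S₂ * (Jmat * x)) = -(S₂ * (Jmat * (S₃ * x))) := by
  rw [← mul_assoc, ← mul_assoc, idH2]; simp [mul_assoc]
lemma idH3x (x : GL (Fin 2) ℤ) : S₁ * (S₃ * (Jmat * x)) = -(S₁ * (Jmat * (S₃ * x))) := by
  rw [← mul_assoc, ← mul_assoc, idH3]; simp [mul_assoc]

lemma wordProd_congr {i i' : ℕ → ℕ} : ∀ {n}, (∀ k, k ≤ n → i k = i' k) →
    wordProd i n = wordProd i' n := by
  intro n
  induction n with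
  | zero => intro h; simp [wordProd, h 0 le_rfl]
  | succ n ih =>
      intro h
      rw [wordProd, wordProd, ih (fun k hk => h k (hk.trans (Nat.le_succ n))), h (n+1) le_rfl]

lemma wordProd_peel (i : ℕ → ℕ) : ∀ n,
    wordProd i (n+1) = SS (i 0) * Jmat * wordProd (fun k => i (k+1)) n := by
  intro n
  induction n with
  | zero => rfl
  | succ n ih =>
      rw [wordProd, ih]
      show _ = SS (i 0) * Jmat * (wordProd (fun k => i (k+1)) n * Jmat * SS (i (n+2)))
      simp [mul_assoc]

lemma wordProd_inv (i : ℕ → ℕ) : ∀ n,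
    (wordProd i n)⁻¹ = wordProd (fun k => i (n - k)) n := by
  intro n
  induction n with
  | zero => exact SS_inv (i 0)
  | succ n ih =>
      rw [wordProd, mul_inv_rev, mul_inv_rev, ih, SS_inv, J_inv, wordProd_peel]
      have h1 : wordProd (fun k => i (n + 1 - (k+1))) n = wordProd (fun k => i (n - k)) n :=
        wordProd_congr (fun k _ => by congr 1; omega)
      rw [h1]
      simp [mul_assoc]

/-- Pushing `S₃` from the left through a word whose letters (except possibly the last)
lie in `{1,2}` and whose last letter lies in `{1,2,3}`. -/
lemma push3 : ∀ (n : ℕ) (j : ℕ → ℕ), (∀ k, k < n → j k = 1 ∨ j k = 2) →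
    (j n = 1 ∨ j n = 2 ∨ j n = 3) →
    ∃ (ε : GL (Fin 2) ℤ) (j' : ℕ → ℕ), (ε = 1 ∨ ε = -1) ∧
      (∀ k, k < n → j' k = 1 ∨ j' k = 2) ∧ (j' n = 1 ∨ j' n = 2 ∨ j' n = 3) ∧
      S₃ * wordProd j n = ε * (wordProd j' n * S₁) := by
  intro n
  induction n with
  | zero =>
      intro j _ hlast
      rcases hlast with h|h|h
      · exact ⟨1, fun _ => 3, Or.inl rfl, fun k hk => absurd hk (Nat.not_lt_zero k),
          Or.inr (Or.inr rfl), by simp [wordProd, SS, h]⟩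
      · exact ⟨1, fun _ => 2, Or.inl rfl, fun k hk => absurd hk (Nat.not_lt_zero k),
          Or.inr (Or.inl rfl), by simp [wordProd, SS, h, idT2]⟩
      · exact ⟨1, fun _ => 1, Or.inl rfl, fun k hk => absurd hk (Nat.not_lt_zero k),
          Or.inl rfl, by simp [wordProd, SS, h, idT3]⟩
  | succ n ih =>
      intro j hmid hlast
      obtain ⟨ε, j'', hε, hm'', hl'', heq⟩ :=
        ih (fun k => j (k+1)) (fun k hk => hmid (k+1) (Nat.succ_lt_succ hk)) hlast
      have h0 : j 0 = 1 ∨ j 0 = 2 := hmid 0 (Nat.succ_pos n)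
      refine ⟨-ε, fun k => Nat.casesOn k (if j 0 = 1 then 2 else 1) j'', ?_, ?_, ?_, ?_⟩
      · rcases hε with rfl|rfl
        · exact Or.inr rfl
        · exact Or.inl (by simp)
      · intro k hk
        cases k with
        | zero => rcases h0 with h|h <;> simp [h]
        | succ k => exact hm'' k (Nat.lt_of_succ_lt_succ hk)
      · exact hl''
      · rw [wordProd_peel, wordProd_peel]
        have hsub : wordProd (fun k => (Nat.casesOn (k+1) (if j 0 = 1 then 2 else 1) j'' : ℕ)) n
            = wordProd j'' n := rfl
        rw [hsub]
        rcases h0 with h|h <;> rw [h] <;>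
          simp only [mul_assoc] <;>
          [rw [show SS 1 = S₁ from rfl, idM1x]; rw [show SS 2 = S₂ from rfl, idM2x]] <;>
          rw [show S₃ * wordProd (fun k => j (k+1)) n = ε * (wordProd j'' n * S₁) from heq] <;>
          rcases hε with rfl|rfl <;>
          simp [SS, mul_assoc]

/-- If `A` admits an expression with `n` factors `J`, so does `A⁻¹`. -/
lemma key {A : GL (Fin 2) ℤ} {n : ℕ}
    (h : ∃ (ε : GL (Fin 2) ℤ) (i : ℕ → ℕ) (m : ℕ),
      (ε = 1 ∨ ε = -1) ∧ (i 0 = 1 ∨ i 0 = 2 ∨ i 0 = 3) ∧ (i n = 1 ∨ i n = 2 ∨ i n = 3) ∧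
      (∀ k, 0 < k → k < n → i k = 1 ∨ i k = 2) ∧ m ≤ 1 ∧ A = ε * wordProd i n * S₁ ^ m) :
    ∃ (ε : GL (Fin 2) ℤ) (i : ℕ → ℕ) (m : ℕ),
      (ε = 1 ∨ ε = -1) ∧ (i 0 = 1 ∨ i 0 = 2 ∨ i 0 = 3) ∧ (i n = 1 ∨ i n = 2 ∨ i n = 3) ∧
      (∀ k, 0 < k → k < n → i k = 1 ∨ i k = 2) ∧ m ≤ 1 ∧ A⁻¹ = ε * wordProd i n * S₁ ^ m := by
  obtain ⟨ε, i, m, hε, h0, hn, hmid, hm, hA⟩ := h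
  have hεi : ε⁻¹ = ε := by
    rcases hε with rfl|rfl
    · exact inv_one
    · exact inv_eq_of_mul_eq_one_right (by simp)
  have hAinv : A⁻¹ = ε * (S₁ ^ m * wordProd (fun k => i (n - k)) n) := by
    rw [hA, mul_inv_rev, mul_inv_rev, hεi, wordProd_inv, ← inv_pow, S1_inv]
    rcases hε with rfl|rfl
    · simp [mul_assoc]
    · simp [mul_assoc]
  rcases Nat.le_one_iff_eq_zero_or_eq_one.mp hm with rfl|rfl
  · -- m = 0 : pure reversal
    refine ⟨ε, fun k => i (n - k), 0, hε, ?_, ?_, ?_, Nat.zero_le 1, ?_⟩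
    · exact hn
    · show i (n - n) = 1 ∨ i (n - n) = 2 ∨ i (n - n) = 3
      rw [Nat.sub_self]; exact h0
    · intro k hk1 hk2; exact hmid (n - k) (by omega) (by omega)
    · rw [hAinv]; simp [mul_assoc]
  · -- m = 1
    cases n with
    | zero =>
        rcases h0 with h|h|h
        · refine ⟨ε, fun _ => 1, 1, hε, Or.inl rfl, Or.inl rfl,
            fun k hk1 hk2 => absurd hk2 (by omega), le_rfl, ?_⟩
          rw [hAinv]
          simp [wordProd, SS, h, mul_assoc]
        · refine ⟨ε, fun _ => 3, 1, hε, Or.inr (Or.inr rfl), Or.inr (Or.inr rfl),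
            fun k hk1 hk2 => absurd hk2 (by omega), le_rfl, ?_⟩
          rw [hAinv]
          simp only [wordProd, SS, h, pow_one]
          rw [idZ2]
          simp [mul_assoc]
        · refine ⟨ε, fun _ => 2, 1, hε, Or.inr (Or.inl rfl), Or.inr (Or.inl rfl),
            fun k hk1 hk2 => absurd hk2 (by omega), le_rfl, ?_⟩
          rw [hAinv]
          simp only [wordProd, SS, h, pow_one]
          rw [idZ3]
          simp [mul_assoc]
    | succ N =>
        obtain ⟨ε₂, j'', hε₂, hm'', hl'', heq⟩ := push3 N (fun k => i (N+1-(k+1)))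
          (fun k hk => hmid (N+1-(k+1)) (by omega) (by omega))
          (by
            have h00 : N+1-(N+1) = 0 := by omega
            show i (N+1-(N+1)) = 1 ∨ i (N+1-(N+1)) = 2 ∨ i (N+1-(N+1)) = 3
            rw [h00]; exact h0)
        have e1 : wordProd (fun k => i (N+1-k)) (N+1)
            = SS (i (N+1)) * Jmat * wordProd (fun k => i (N+1-(k+1))) N :=
          wordProd_peel (fun k => i (N+1-k)) N
        rcases hn with h|h|h
        · refine ⟨-(ε*ε₂), fun k => Nat.casesOn k 3 j'', 1, ?_, Or.inr (Or.inr rfl), hl'', ?_,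
            le_rfl, ?_⟩
          · rcases hε with rfl|rfl <;> rcases hε₂ with rfl|rfl
            · exact Or.inr (by simp)
            · exact Or.inl (by simp)
            · exact Or.inl (by simp)
            · exact Or.inr (by simp)
          · intro k hk1 hk2
            cases k with
            | zero => omega
            | succ k => exact hm'' k (by omega)
          · rw [hAinv, e1, h, pow_one]
            rw [wordProd_peel (fun k => (Nat.casesOn k 3 j'' : ℕ)) N]
            have hsub : wordProd (fun k => (Nat.casesOn (k+1) (3:ℕ) j'' : ℕ)) N
                = wordProd j'' N := rfl
            rw [hsub]
            simp only [mul_assoc]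
            rw [show SS 1 = S₁ from rfl, idH1x]
            rw [show S₃ * wordProd (fun k => i (N+1-(k+1))) N = ε₂ * (wordProd j'' N * S₁)
              from heq]
            rcases hε with rfl|rfl <;> rcases hε₂ with rfl|rfl <;> simp [SS, mul_assoc]
        · refine ⟨-(ε*ε₂), fun k => Nat.casesOn k 2 j'', 1, ?_, Or.inr (Or.inl rfl), hl'', ?_,
            le_rfl, ?_⟩
          · rcases hε with rfl|rfl <;> rcases hε₂ with rfl|rfl
            · exact Or.inr (by simp)
            · exact Or.inl (by simp)
            · exact Or.inl (by simp)
            · exact Or.inr (by simp)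
          · intro k hk1 hk2
            cases k with
            | zero => omega
            | succ k => exact hm'' k (by omega)
          · rw [hAinv, e1, h, pow_one]
            rw [wordProd_peel (fun k => (Nat.casesOn k 2 j'' : ℕ)) N]
            have hsub : wordProd (fun k => (Nat.casesOn (k+1) (2:ℕ) j'' : ℕ)) N
                = wordProd j'' N := rfl
            rw [hsub]
            simp only [mul_assoc]
            rw [show SS 2 = S₂ from rfl, idH2x]
            rw [show S₃ * wordProd (fun k => i (N+1-(k+1))) N = ε₂ * (wordProd j'' N * S₁)
              from heq]
            rcases hε with rfl|rfl <;> rcases hε₂ with rfl|rfl <;> simp [SS, mul_assoc]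
        · refine ⟨-(ε*ε₂), fun k => Nat.casesOn k 1 j'', 1, ?_, Or.inl rfl, hl'', ?_,
            le_rfl, ?_⟩
          · rcases hε with rfl|rfl <;> rcases hε₂ with rfl|rfl
            · exact Or.inr (by simp)
            · exact Or.inl (by simp)
            · exact Or.inl (by simp)
            · exact Or.inr (by simp)
          · intro k hk1 hk2
            cases k with
            | zero => omega
            | succ k => exact hm'' k (by omega)
          · rw [hAinv, e1, h, pow_one]
            rw [wordProd_peel (fun k => (Nat.casesOn k 1 j'' : ℕ)) N]
            have hsub : wordProd (fun k => (Nat.casesOn (k+1) (1:ℕ) j'' : ℕ)) N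
                = wordProd j'' N := rfl
            rw [hsub]
            simp only [mul_assoc]
            rw [show SS 3 = S₃ from rfl, idH3x]
            rw [show S₃ * wordProd (fun k => i (N+1-(k+1))) N = ε₂ * (wordProd j'' N * S₁)
              from heq]
            rcases hε with rfl|rfl <;> rcases hε₂ with rfl|rfl <;> simp [SS, mul_assoc]

/-- For every `A ∈ GL₂(ℤ)`, one has `|A⁻¹| = |A|`. -/
theorem matNorm_inv (A : GL (Fin 2) ℤ) : matNorm A⁻¹ = matNorm A := by
  unfold matNorm
  congr 1
  ext n
  simp only [Set.mem_setOf_eq]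
  constructor
  · intro h
    have := key h
    rwa [inv_inv] at this
  · intro h
    exact key h
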